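/- The equation ∑_{k=1}^∞ (k+1) e^{-s √((k+1)² - 1)} = 1 has a unique real solution s_0 > 0, and s_0/π lies strictly between 0.274 and 0.275. -/
import Mathlib

open Real Finset

section Stmt5Aux

/-- Degree-4 Taylor lower bound for `exp (-t)` on `[0,1]`. -/
lemma stmt5_exp_poly_lb {t : ℝ} (h0 : 0 ≤ t) (h1 : t ≤ 1) :
    1 - t + t^2/2 - t^3/6 - 5*t^4/96 ≤ Real.exp (-t) := by
  have h : |(-t)| ≤ 1 := by rw [abs_neg, abs_of_nonneg h0]; exact h1
  have hb := Real.exp_bound h (n := 4) (by norm_num)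
  have hs : ∑ m ∈ Finset.range 4, (-t)^m / (Nat.factorial m) = 1 - t + t^2/2 - t^3/6 := by
    simp [Finset.sum_range_succ, Nat.factorial]
    ring
  rw [hs, abs_neg, abs_of_nonneg h0] at hb
  have hb2 := (abs_le.mp hb).1
  norm_num [Nat.factorial] at hb2 ⊢
  linarith

/-- Degree-4 Taylor upper bound for `exp (-t)` on `[0,1]`. -/
lemma stmt5_exp_poly_ub {t : ℝ} (h0 : 0 ≤ t) (h1 : t ≤ 1) :
    Real.exp (-t) ≤ 1 - t + t^2/2 - t^3/6 + 5*t^4/96 := by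
  have h : |(-t)| ≤ 1 := by rw [abs_neg, abs_of_nonneg h0]; exact h1
  have hb := Real.exp_bound h (n := 4) (by norm_num)
  have hs : ∑ m ∈ Finset.range 4, (-t)^m / (Nat.factorial m) = 1 - t + t^2/2 - t^3/6 := by
    simp [Finset.sum_range_succ, Nat.factorial]
    ring
  rw [hs, abs_neg, abs_of_nonneg h0] at hb
  have hb2 := (abs_le.mp hb).2
  norm_num [Nat.factorial] at hb2 ⊢
  linarith

lemma stmt5_exp_neg_lb {x c : ℝ} (hxc : x ≤ c) (hc0 : 0 ≤ c) (hc14 : c ≤ 14) :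
    (1 - c/32 + (c/32)^2/2 - (c/32)^3/6 - 5*(c/32)^4/96)^32 ≤ Real.exp (-x) := by
  have ht0 : 0 ≤ c/32 := by linarith
  have ht1 : c/32 ≤ 1 := by linarith
  have hL0 : (0:ℝ) ≤ 1 - c/32 + (c/32)^2/2 - (c/32)^3/6 - 5*(c/32)^4/96 := by
    nlinarith [sq_nonneg (c/32), sq_nonneg ((c/32)^2), mul_nonneg ht0 (sq_nonneg (c/32))]
  calc (1 - c/32 + (c/32)^2/2 - (c/32)^3/6 - 5*(c/32)^4/96)^32
      ≤ Real.exp (-(c/32)) ^ 32 := pow_le_pow_left₀ hL0 (stmt5_exp_poly_lb ht0 ht1) 32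
    _ = Real.exp (-c) := by
        rw [← Real.exp_nat_mul]; congr 1; push_cast; ring
    _ ≤ Real.exp (-x) := Real.exp_le_exp.mpr (by linarith)

lemma stmt5_exp_neg_ub {x c : ℝ} (hxc : c ≤ x) (hc0 : 0 ≤ c) (hc14 : c ≤ 14) :
    Real.exp (-x) ≤ (1 - c/32 + (c/32)^2/2 - (c/32)^3/6 + 5*(c/32)^4/96)^32 := by
  have ht0 : 0 ≤ c/32 := by linarith
  have ht1 : c/32 ≤ 1 := by linarith
  calc Real.exp (-x) ≤ Real.exp (-c) := Real.exp_le_exp.mpr (by linarith)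
    _ = Real.exp (-(c/32)) ^ 32 := by
        rw [← Real.exp_nat_mul]; congr 1; push_cast; ring
    _ ≤ (1 - c/32 + (c/32)^2/2 - (c/32)^3/6 + 5*(c/32)^4/96)^32 :=
        pow_le_pow_left₀ (Real.exp_nonneg _) (stmt5_exp_poly_ub ht0 ht1) 32

lemma stmt5_sqrt_le_of_sq {v w : ℝ} (hw : 0 ≤ w) (h : v ≤ w^2) : Real.sqrt v ≤ w := by
  calc Real.sqrt v ≤ Real.sqrt (w^2) := Real.sqrt_le_sqrt h
    _ = w := Real.sqrt_sq hw

lemma stmt5_le_sqrt_of_sq {v w : ℝ} (hw : 0 ≤ w) (h : w^2 ≤ v) : w ≤ Real.sqrt v := by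
  calc w = Real.sqrt (w^2) := (Real.sqrt_sq hw).symm
    _ ≤ Real.sqrt v := Real.sqrt_le_sqrt h

lemma stmt5_term_lb {s v : ℝ} (w c : ℝ) (hs : 0 ≤ s) (hw0 : 0 ≤ w) (hv : v ≤ w^2)
    (hc : s * w ≤ c) (hc0 : 0 ≤ c) (hc14 : c ≤ 14) :
    (1 - c/32 + (c/32)^2/2 - (c/32)^3/6 - 5*(c/32)^4/96)^32 ≤ Real.exp (-s * Real.sqrt v) := by
  have h1 : Real.sqrt v ≤ w := stmt5_sqrt_le_of_sq hw0 hv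
  have h2 : s * Real.sqrt v ≤ c := le_trans (mul_le_mul_of_nonneg_left h1 hs) hc
  rw [neg_mul]
  exact stmt5_exp_neg_lb h2 hc0 hc14

lemma stmt5_term_ub {s v : ℝ} (w c : ℝ) (hs : 0 ≤ s) (hw0 : 0 ≤ w) (hv : w^2 ≤ v)
    (hc : c ≤ s * w) (hc0 : 0 ≤ c) (hc14 : c ≤ 14) :
    Real.exp (-s * Real.sqrt v) ≤ (1 - c/32 + (c/32)^2/2 - (c/32)^3/6 + 5*(c/32)^4/96)^32 := by
  have h1 : w ≤ Real.sqrt v := stmt5_le_sqrt_of_sq hw0 hv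
  have h2 : c ≤ s * Real.sqrt v := le_trans hc (mul_le_mul_of_nonneg_left h1 hs)
  rw [neg_mul]
  exact stmt5_exp_neg_ub h2 hc0 hc14

/-- The summand, reindexed over `ℕ`. -/
noncomputable def stmt5_g (s : ℝ) (n : ℕ) : ℝ :=
  ((n:ℝ)+2) * Real.exp (-s * Real.sqrt (((n:ℝ)+2)^2 - 1))

/-- The series, reindexed over `ℕ`. -/
noncomputable def stmt5_F (s : ℝ) : ℝ := ∑' n : ℕ, stmt5_g s n

lemma stmt5_tsum_pnat_eq (s : ℝ) :
    (∑' k : ℕ+, ((k:ℝ)+1) * Real.exp (-s * Real.sqrt (((k:ℝ)+1)^2 - 1))) = stmt5_F s := by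
  rw [stmt5_F, ← Equiv.tsum_eq Equiv.pnatEquivNat.symm
      (fun k : ℕ+ => ((k:ℝ)+1) * Real.exp (-s * Real.sqrt (((k:ℝ)+1)^2 - 1)))]
  apply tsum_congr
  intro n
  have h : ((Equiv.pnatEquivNat.symm n : ℕ+) : ℝ) = (n:ℝ) + 1 := by
    have : ((Equiv.pnatEquivNat.symm n : ℕ+) : ℕ) = n + 1 := rfl
    exact_mod_cast congrArg (Nat.cast : ℕ → ℝ) this
  rw [stmt5_g, h]
  have h2 : ((n:ℝ)+1+1) = (n:ℝ)+2 := by ring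
  rw [h2]

lemma stmt5_g_nonneg (s : ℝ) (n : ℕ) : 0 ≤ stmt5_g s n := by
  rw [stmt5_g]; positivity

lemma stmt5_sqrt_lb (n : ℕ) : (n:ℝ) + 1 ≤ Real.sqrt (((n:ℝ)+2)^2 - 1) := by
  apply stmt5_le_sqrt_of_sq (by positivity)
  nlinarith [Nat.cast_nonneg (α := ℝ) n]

lemma stmt5_g_le {s : ℝ} (hs : 0 ≤ s) (n : ℕ) :
    stmt5_g s n ≤ ((n:ℝ)+2) * Real.exp (-s) ^ (n+1) := by
  rw [stmt5_g]
  have h2 : (0:ℝ) ≤ (n:ℝ)+2 := by positivity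
  apply mul_le_mul_of_nonneg_left _ h2
  rw [← Real.exp_nat_mul]
  apply Real.exp_le_exp.mpr
  have h1 := stmt5_sqrt_lb n
  have h3 := mul_le_mul_of_nonneg_left h1 hs
  push_cast
  nlinarith

lemma stmt5_summable_aux {x : ℝ} (h0 : 0 ≤ x) (hx : x < 1) :
    Summable (fun n : ℕ => ((n:ℝ)+2) * x ^ (n+1)) := by
  have h1 : Summable (fun n : ℕ => (n:ℝ)^1 * x^n) :=
    summable_pow_mul_geometric_of_norm_lt_one 1 (by rwa [Real.norm_eq_abs, abs_of_nonneg h0])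
  have h2 : Summable (fun n : ℕ => x^n) := summable_geometric_of_lt_one h0 hx
  refine ((h1.mul_left x).add (h2.mul_left (2*x))).congr ?_
  intro n; ring

lemma stmt5_summable {s : ℝ} (hs : 0 < s) : Summable (stmt5_g s) :=
  Summable.of_nonneg_of_le (stmt5_g_nonneg s) (stmt5_g_le hs.le)
    (stmt5_summable_aux (Real.exp_nonneg _) (Real.exp_lt_one_iff.mpr (by linarith)))

lemma stmt5_strict {s t : ℝ} (hs : 0 < s) (hst : s < t) : stmt5_F t < stmt5_F s := by
  refine Summable.tsum_lt_tsum_of_nonneg (i := 0) (stmt5_g_nonneg t) (fun n => ?_) ?_ (stmt5_summable hs)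
  · rw [stmt5_g, stmt5_g]
    have h2 : (0:ℝ) ≤ (n:ℝ)+2 := by positivity
    apply mul_le_mul_of_nonneg_left _ h2
    apply Real.exp_le_exp.mpr
    have h := Real.sqrt_nonneg (((n:ℝ)+2)^2 - 1)
    nlinarith
  · rw [stmt5_g, stmt5_g]
    have h3 : (0:ℝ) < Real.sqrt ((((0:ℕ):ℝ)+2)^2 - 1) := by
      apply Real.sqrt_pos.mpr; norm_num
    have h4 : -t * Real.sqrt ((((0:ℕ):ℝ)+2)^2 - 1) < -s * Real.sqrt ((((0:ℕ):ℝ)+2)^2 - 1) := by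
      nlinarith
    have h5 := Real.exp_lt_exp.mpr h4
    nlinarith

lemma stmt5_continuousOn :
    ContinuousOn stmt5_F (Set.Icc (0.274*π) (0.275*π)) := by
  show ContinuousOn (fun s => ∑' n : ℕ, stmt5_g s n) _
  apply continuousOn_tsum (f := fun (n : ℕ) (s : ℝ) => stmt5_g s n)
    (u := fun n : ℕ => ((n:ℝ)+2) * Real.exp (-(4/5)) ^ (n+1))
  · intro i
    apply Continuous.continuousOn
    simp only [stmt5_g]
    fun_prop
  · exact stmt5_summable_aux (Real.exp_nonneg _) (Real.exp_lt_one_iff.mpr (by norm_num))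
  · intro n s hs
    have hs45 : 4/5 ≤ s := by
      have := hs.1
      nlinarith [Real.pi_gt_d6]
    rw [Real.norm_eq_abs, abs_of_nonneg (stmt5_g_nonneg s n)]
    calc stmt5_g s n ≤ ((n:ℝ)+2) * Real.exp (-s) ^ (n+1) := stmt5_g_le (by linarith) n
      _ ≤ ((n:ℝ)+2) * Real.exp (-(4/5)) ^ (n+1) := by
          apply mul_le_mul_of_nonneg_left _ (by positivity)
          exact pow_le_pow_left₀ (Real.exp_nonneg _)
            (Real.exp_le_exp.mpr (by linarith)) _

lemma stmt5_g_lb_num {s : ℝ} (n : ℕ) (w c q r : ℝ) (hs : 0 ≤ s)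
    (hw0 : 0 ≤ w) (hv : ((n:ℝ)+2)^2 - 1 ≤ w^2) (hc : s*w ≤ c) (hc0 : 0 ≤ c) (hc14 : c ≤ 14)
    (hq : q ≤ (1 - c/32 + (c/32)^2/2 - (c/32)^3/6 - 5*(c/32)^4/96)^32)
    (hr : r ≤ ((n:ℝ)+2) * q) : r ≤ stmt5_g s n := by
  have h1 := stmt5_term_lb (v := ((n:ℝ)+2)^2 - 1) w c hs hw0 hv hc hc0 hc14
  have hn2 : (0:ℝ) ≤ (n:ℝ)+2 := by positivity
  rw [stmt5_g]
  calc r ≤ ((n:ℝ)+2) * q := hr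
    _ ≤ ((n:ℝ)+2) * Real.exp (-s * Real.sqrt (((n:ℝ)+2)^2-1)) :=
        mul_le_mul_of_nonneg_left (hq.trans h1) hn2

lemma stmt5_g_ub_num {s : ℝ} (n : ℕ) (w c q r : ℝ) (hs : 0 ≤ s)
    (hw0 : 0 ≤ w) (hv : w^2 ≤ ((n:ℝ)+2)^2 - 1) (hc : c ≤ s*w) (hc0 : 0 ≤ c) (hc14 : c ≤ 14)
    (hq : (1 - c/32 + (c/32)^2/2 - (c/32)^3/6 + 5*(c/32)^4/96)^32 ≤ q)
    (hr : ((n:ℝ)+2) * q ≤ r) : stmt5_g s n ≤ r := by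
  have h1 := stmt5_term_ub (v := ((n:ℝ)+2)^2 - 1) w c hs hw0 hv hc hc0 hc14
  have hn2 : (0:ℝ) ≤ (n:ℝ)+2 := by positivity
  rw [stmt5_g]
  calc ((n:ℝ)+2) * Real.exp (-s * Real.sqrt (((n:ℝ)+2)^2-1))
      ≤ ((n:ℝ)+2) * q := mul_le_mul_of_nonneg_left (h1.trans hq) hn2
    _ ≤ r := hr

lemma stmt5_lin_le_geom : ∀ m : ℕ, (m:ℝ) + 2 ≤ 2 * (13/10)^(m+1) := by
  intro m
  induction m with
  | zero => norm_num
  | succ k ih =>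
    rcases Nat.lt_or_ge k 2 with hk | hk
    · interval_cases k <;> norm_num
    · have hk' : (2:ℝ) ≤ (k:ℝ) := by exact_mod_cast hk
      have h13 : (0:ℝ) ≤ (13/10)^(k+1) := by positivity
      push_cast
      calc ((k:ℝ)+1) + 2 ≤ (13/10) * ((k:ℝ)+2) := by linarith
        _ ≤ (13/10) * (2*(13/10)^(k+1)) := by nlinarith [ih]
        _ = 2 * (13/10)^(k+1+1) := by ring

lemma stmt5_tail_bound {s q : ℝ} (hs : 0 < s) (hq : Real.exp (-s) ≤ q) (hq1 : 13/10*q < 1) :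
    (∑' n : ℕ, stmt5_g s (n + 12)) ≤ 2 * (13/10*q)^13 * (1 - 13/10*q)⁻¹ := by
  have hq0 : 0 ≤ q := le_trans (Real.exp_nonneg _) hq
  have hr0 : (0:ℝ) ≤ 13/10*q := by linarith
  have key : ∀ n : ℕ, stmt5_g s (n+12) ≤ 2*(13/10*q)^13 * (13/10*q)^n := by
    intro n
    have h1 := stmt5_g_le hs.le (n+12)
    have h2 := stmt5_lin_le_geom (n+12)
    have h3 : Real.exp (-s) ^ (n+12+1) ≤ q ^ (n+13) :=
      pow_le_pow_left₀ (Real.exp_nonneg _) hq _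
    have h4 : (0:ℝ) ≤ Real.exp (-s) ^ (n+12+1) := by positivity
    have h5 : ((n+12:ℕ):ℝ)+2 ≤ 2 * (13/10)^(n+13) := by push_cast at h2 ⊢; linarith
    have h6 : (0:ℝ) ≤ 2 * (13/10)^(n+13) := by positivity
    calc stmt5_g s (n+12) ≤ (((n+12:ℕ):ℝ)+2) * Real.exp (-s) ^ (n+12+1) := h1
      _ ≤ (2 * (13/10)^(n+13)) * (q ^ (n+13)) := by
          apply mul_le_mul h5 h3 h4 h6
      _ = 2*(13/10*q)^13 * (13/10*q)^n := by
          ring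
  have hsum2 : Summable (fun n : ℕ => 2*(13/10*q)^13 * (13/10*q)^n) :=
    (summable_geometric_of_lt_one hr0 hq1).mul_left _
  have hsum1 : Summable (fun n : ℕ => stmt5_g s (n + 12)) :=
    (summable_nat_add_iff 12).mpr (stmt5_summable hs)
  calc (∑' n : ℕ, stmt5_g s (n+12)) ≤ ∑' n : ℕ, 2*(13/10*q)^13 * (13/10*q)^n :=
        Summable.tsum_le_tsum key hsum1 hsum2
    _ = 2*(13/10*q)^13 * (1 - 13/10*q)⁻¹ := by
        rw [tsum_mul_left, tsum_geometric_of_lt_one hr0 hq1]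

end Stmt5Aux

section Stmt5Num

lemma stmt5_F_lower {s : ℝ} (hs0 : 0 < s) (hsA : s ≤ 0.8607963998) : 1 < stmt5_F s := by
  have hs := hs0.le
  have h0 : (0.450313726:ℝ) ≤ stmt5_g s 0 :=
    stmt5_g_lb_num 0 1.7320509 1.4909432 0.225156863 0.450313726 hs (by norm_num) (by norm_num)
      (by nlinarith) (by norm_num) (by norm_num) (by norm_num) (by norm_num)
  have h1 : (0.2628437667:ℝ) ≤ stmt5_g s 1 :=
    stmt5_g_lb_num 1 2.8284272 2.4347 0.0876145889 0.2628437667 hs (by norm_num) (by norm_num)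
      (by nlinarith) (by norm_num) (by norm_num) (by norm_num) (by norm_num)
  have h2 : (0.1425668148:ℝ) ≤ stmt5_g s 2 :=
    stmt5_g_lb_num 2 3.8729834 3.3338502 0.0356417037 0.1425668148 hs (by norm_num) (by norm_num)
      (by nlinarith) (by norm_num) (by norm_num) (by norm_num) (by norm_num)
  have h3 : (0.073637085:ℝ) ≤ stmt5_g s 3 :=
    stmt5_g_lb_num 3 4.8989795 4.217024 0.014727417 0.073637085 hs (by norm_num) (by norm_num)
      (by nlinarith) (by norm_num) (by norm_num) (by norm_num) (by norm_num)
  have h4 : (0.0367724664:ℝ) ≤ stmt5_g s 4 :=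
    stmt5_g_lb_num 4 5.9160798 5.0925402 0.0061287444 0.0367724664 hs (by norm_num) (by norm_num)
      (by nlinarith) (by norm_num) (by norm_num) (by norm_num) (by norm_num)
  have h5 : (0.0179143503:ℝ) ≤ stmt5_g s 5 :=
    stmt5_g_lb_num 5 6.9282033 5.9637725 0.0025591929 0.0179143503 hs (by norm_num) (by norm_num)
      (by nlinarith) (by norm_num) (by norm_num) (by norm_num) (by norm_num)
  have h6 : (0.0085613608:ℝ) ≤ stmt5_g s 6 :=
    stmt5_g_lb_num 6 7.937254 6.8323597 0.0010701701 0.0085613608 hs (by norm_num) (by norm_num)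
      (by nlinarith) (by norm_num) (by norm_num) (by norm_num) (by norm_num)
  have h7 : (0.004027941:ℝ) ≤ stmt5_g s 7 :=
    stmt5_g_lb_num 7 8.944272 7.6991972 0.000447549 0.004027941 hs (by norm_num) (by norm_num)
      (by nlinarith) (by norm_num) (by norm_num) (by norm_num) (by norm_num)
  have h8 : (0.001869846:ℝ) ≤ stmt5_g s 8 :=
    stmt5_g_lb_num 8 9.9498744 8.5648161 0.0001869846 0.001869846 hs (by norm_num) (by norm_num)
      (by nlinarith) (by norm_num) (by norm_num) (by norm_num) (by norm_num)
  have h9 : (0.0008576755:ℝ) ≤ stmt5_g s 9 :=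
    stmt5_g_lb_num 9 10.9544512 9.4295522 0.0000779705 0.0008576755 hs (by norm_num) (by norm_num)
      (by nlinarith) (by norm_num) (by norm_num) (by norm_num) (by norm_num)
  have h10 : (0.000389028:ℝ) ≤ stmt5_g s 10 :=
    stmt5_g_lb_num 10 11.9582608 10.2936279 0.000032419 0.000389028 hs (by norm_num) (by norm_num)
      (by nlinarith) (by norm_num) (by norm_num) (by norm_num) (by norm_num)
  have h11 : (0.0001745497:ℝ) ≤ stmt5_g s 11 :=
    stmt5_g_lb_num 11 12.9614814 11.1571966 0.0000134269 0.0001745497 hs (by norm_num) (by norm_num)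
      (by nlinarith) (by norm_num) (by norm_num) (by norm_num) (by norm_num)
  have h12 : (0.0000774662:ℝ) ≤ stmt5_g s 12 :=
    stmt5_g_lb_num 12 13.9642401 12.0203677 0.0000055333 0.0000774662 hs (by norm_num) (by norm_num)
      (by nlinarith) (by norm_num) (by norm_num) (by norm_num) (by norm_num)
  have h13 : (0.0000339945:ℝ) ≤ stmt5_g s 13 :=
    stmt5_g_lb_num 13 14.9666296 12.8832209 0.0000022663 0.0000339945 hs (by norm_num) (by norm_num)
      (by nlinarith) (by norm_num) (by norm_num) (by norm_num) (by norm_num)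
  have key : ∑ n ∈ Finset.range 14, stmt5_g s n ≤ stmt5_F s :=
    Summable.sum_le_tsum _ (fun n _ => stmt5_g_nonneg s n) (stmt5_summable hs0)
  have expand : ∑ n ∈ Finset.range 14, stmt5_g s n
      = stmt5_g s 0 + stmt5_g s 1 + stmt5_g s 2 + stmt5_g s 3 + stmt5_g s 4 + stmt5_g s 5
        + stmt5_g s 6 + stmt5_g s 7 + stmt5_g s 8 + stmt5_g s 9 + stmt5_g s 10 + stmt5_g s 11
        + stmt5_g s 12 + stmt5_g s 13 := by
    simp [Finset.sum_range_succ]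
  rw [expand] at key
  linarith

lemma stmt5_F_upper {s : ℝ} (hs0 : 0 < s) (hsB : 0.863937965 ≤ s) : stmt5_F s < 1 := by
  have hs := hs0.le
  have h0 : stmt5_g s 0 ≤ (0.4478775154:ℝ) :=
    stmt5_g_ub_num 0 1.7320508 1.4963844 0.2239387577 0.4478775154 hs (by norm_num) (by norm_num)
      (by nlinarith) (by norm_num) (by norm_num) (by norm_num) (by norm_num)
  have h1 : stmt5_g s 1 ≤ (0.2605500672:ℝ) :=
    stmt5_g_ub_num 1 2.8284271 2.4435855 0.0868500224 0.2605500672 hs (by norm_num) (by norm_num)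
      (by nlinarith) (by norm_num) (by norm_num) (by norm_num) (by norm_num)
  have h2 : stmt5_g s 2 ≤ (0.1409041988:ℝ) :=
    stmt5_g_ub_num 2 3.8729833 3.3460173 0.0352260497 0.1409041988 hs (by norm_num) (by norm_num)
      (by nlinarith) (by norm_num) (by norm_num) (by norm_num) (by norm_num)
  have h3 : stmt5_g s 3 ≤ (0.07259583:ℝ) :=
    stmt5_g_ub_num 3 4.8989794 4.2324142 0.014519166 0.07259583 hs (by norm_num) (by norm_num)
      (by nlinarith) (by norm_num) (by norm_num) (by norm_num) (by norm_num)
  have h4 : stmt5_g s 4 ≤ (0.0361861026:ℝ) :=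
    stmt5_g_ub_num 4 5.9160797 5.1111258 0.0060310171 0.0361861026 hs (by norm_num) (by norm_num)
      (by nlinarith) (by norm_num) (by norm_num) (by norm_num) (by norm_num)
  have h5 : stmt5_g s 5 ≤ (0.0176139481:ℝ) :=
    stmt5_g_ub_num 5 6.9282032 5.9855377 0.0025162783 0.0176139481 hs (by norm_num) (by norm_num)
      (by nlinarith) (by norm_num) (by norm_num) (by norm_num) (by norm_num)
  have h6 : stmt5_g s 6 ≤ (0.0084225864:ℝ) :=
    stmt5_g_ub_num 6 7.9372539 6.8572949 0.0010528233 0.0084225864 hs (by norm_num) (by norm_num)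
      (by nlinarith) (by norm_num) (by norm_num) (by norm_num) (by norm_num)
  have h7 : stmt5_g s 7 ≤ (0.0039724965:ℝ) :=
    stmt5_g_ub_num 7 8.9442719 7.727296 0.0004413885 0.0039724965 hs (by norm_num) (by norm_num)
      (by nlinarith) (by norm_num) (by norm_num) (by norm_num) (by norm_num)
  have h8 : stmt5_g s 8 ≤ (0.001853367:ℝ) :=
    stmt5_g_ub_num 8 9.9498743 8.5960741 0.0001853367 0.001853367 hs (by norm_num) (by norm_num)
      (by nlinarith) (by norm_num) (by norm_num) (by norm_num) (by norm_num)
  have h9 : stmt5_g s 9 ≤ (0.0008571739:ℝ) :=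
    stmt5_g_ub_num 9 10.9544511 9.4639661 0.0000779249 0.0008571739 hs (by norm_num) (by norm_num)
      (by nlinarith) (by norm_num) (by norm_num) (by norm_num) (by norm_num)
  have h10 : stmt5_g s 10 ≤ (0.0003936444:ℝ) :=
    stmt5_g_ub_num 10 11.9582607 10.3311954 0.0000328037 0.0003936444 hs (by norm_num) (by norm_num)
      (by nlinarith) (by norm_num) (by norm_num) (by norm_num) (by norm_num)
  have h11 : stmt5_g s 11 ≤ (0.0001797406:ℝ) :=
    stmt5_g_ub_num 11 12.9614813 11.1979157 0.0000138262 0.0001797406 hs (by norm_num) (by norm_num)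
      (by nlinarith) (by norm_num) (by norm_num) (by norm_num) (by norm_num)
  have hq : Real.exp (-s) ≤ 0.4215 := by
    have hx := stmt5_exp_neg_ub (x := s) (c := 0.8639379) (by linarith) (by norm_num) (by norm_num)
    have hnum : ((1:ℝ) - 0.8639379/32 + (0.8639379/32)^2/2 - (0.8639379/32)^3/6
        + 5*(0.8639379/32)^4/96)^32 ≤ 0.4215 := by norm_num
    linarith
  have htail : (∑' n : ℕ, stmt5_g s (n + 12)) ≤ 0.0018 := by
    have h1 := stmt5_tail_bound hs0 hq (by norm_num)
    have h2 : (2:ℝ) * (13/10*0.4215)^13 * (1 - 13/10*0.4215)⁻¹ ≤ 0.0018 := by norm_num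
    linarith
  have split := Summable.sum_add_tsum_nat_add (f := stmt5_g s) 12 (stmt5_summable hs0)
  have expand : ∑ n ∈ Finset.range 12, stmt5_g s n
      = stmt5_g s 0 + stmt5_g s 1 + stmt5_g s 2 + stmt5_g s 3 + stmt5_g s 4 + stmt5_g s 5
        + stmt5_g s 6 + stmt5_g s 7 + stmt5_g s 8 + stmt5_g s 9 + stmt5_g s 10
        + stmt5_g s 11 := by
    simp [Finset.sum_range_succ]
  show (∑' n : ℕ, stmt5_g s n) < 1
  rw [← split, expand]
  linarith

end Stmt5Num

/-- The equation ∑_{k≥1} (k+1) e^{-s√((k+1)²-1)} = 1 has a unique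
positive solution s₀, and 0.274 < s₀/π < 0.275. -/
theorem stmt5 :
    ∃ s₀ : ℝ, 0 < s₀ ∧
      (∑' k : ℕ+, ((k : ℝ) + 1) * Real.exp (-s₀ * Real.sqrt (((k : ℝ) + 1) ^ 2 - 1)) = 1) ∧
      (∀ s : ℝ, 0 < s →
        (∑' k : ℕ+, ((k : ℝ) + 1) * Real.exp (-s * Real.sqrt (((k : ℝ) + 1) ^ 2 - 1)) = 1) →
        s = s₀) ∧
      0.274 < s₀ / Real.pi ∧ s₀ / Real.pi < 0.275 := by
  have hpi := Real.pi_gt_d6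
  have hpi' := Real.pi_lt_d6
  have hpi0 := Real.pi_pos
  have ha0 : (0:ℝ) < 0.274*π := by nlinarith
  have hab : (0.274:ℝ)*π ≤ 0.275*π := by nlinarith
  have hb0 : (0:ℝ) < 0.275*π := by nlinarith
  have hFa : 1 < stmt5_F (0.274*π) := by
    apply stmt5_F_lower ha0
    nlinarith [Real.pi_lt_d20]
  have hFb : stmt5_F (0.275*π) < 1 := by
    apply stmt5_F_upper hb0
    nlinarith [Real.pi_gt_d20]
  have hIcc : (1:ℝ) ∈ Set.Icc (stmt5_F (0.275*π)) (stmt5_F (0.274*π)) := ⟨hFb.le, hFa.le⟩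
  obtain ⟨c, hc, hFc⟩ := intermediate_value_Icc' hab stmt5_continuousOn hIcc
  have hc0 : 0 < c := lt_of_lt_of_le ha0 hc.1
  have hca : 0.274*π < c := by
    rcases lt_or_eq_of_le hc.1 with h | h
    · exact h
    · exfalso; rw [h, hFc] at hFa; exact lt_irrefl 1 hFa
  have hcb : c < 0.275*π := by
    rcases lt_or_eq_of_le hc.2 with h | h
    · exact h
    · exfalso; rw [← h, hFc] at hFb; exact lt_irrefl 1 hFb
  refine ⟨c, hc0, ?_, ?_, ?_, ?_⟩
  · rw [stmt5_tsum_pnat_eq]; exact hFc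
  · intro s hs hseq
    rw [stmt5_tsum_pnat_eq] at hseq
    by_contra hne
    rcases lt_or_gt_of_ne hne with h | h
    · have hlt := stmt5_strict hs h
      rw [hseq, hFc] at hlt
      exact lt_irrefl 1 hlt
    · have hlt := stmt5_strict hc0 h
      rw [hseq, hFc] at hlt
      exact lt_irrefl 1 hlt
  · rw [lt_div_iff₀ hpi0]
    linarith
  · rw [div_lt_iff₀ hpi0]
    linarith
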